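/- It holds that ∫_{−2π}^{2π} (π/2)·(5w sin w − (w² − 8)cos w − 8)/w⁶ dw = (1/160)(1/π² − 2 − 4π·Si(2π)), where Si(2π) = ∫₀^{2π} (sin t)/t dt. (The integrand has a removable singularity at w = 0.) -/

import Mathlib

open Real

open Finset MeasureTheory intervalIntegral Set

theorem cos_bound6 {x : ℝ} (hx : |x| ≤ 1) :
    |Real.cos x - (1 - x ^ 2 / 2 + x ^ 4 / 24)| ≤ |x| ^ 6 * (7 / 4320) :=
  calc
    |Real.cos x - (1 - x ^ 2 / 2 + x ^ 4 / 24)|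
        = ‖Complex.cos x - (1 - (x : ℂ) ^ 2 / 2 + (x:ℂ)^4/24)‖ := by
      rw [← Real.norm_eq_abs, ← Complex.norm_real]; norm_num
    _ = ‖(Complex.exp (x * Complex.I) + Complex.exp (-x * Complex.I)
          - (2 - (x : ℂ) ^ 2 + (x:ℂ)^4/12)) / 2‖ := by
      rw [Complex.cos]
      ring_nf
    _ = ‖((Complex.exp (x * Complex.I) - ∑ m ∈ range 6, (x * Complex.I) ^ m / m.factorial) +
              (Complex.exp (-x * Complex.I) - ∑ m ∈ range 6, (-x * Complex.I) ^ m / m.factorial)) / 2‖ := by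
      congr 1
      simp only [sum_range_succ, range_zero, sum_empty, Nat.factorial]
      push_cast
      ring_nf
      simp [Complex.I_sq]
      ring_nf
    _ ≤ ‖(Complex.exp (x * Complex.I) - ∑ m ∈ range 6, (x * Complex.I) ^ m / m.factorial) / 2‖ +
          ‖(Complex.exp (-x * Complex.I) - ∑ m ∈ range 6, (-x * Complex.I) ^ m / m.factorial) / 2‖ := by
      rw [add_div]; exact norm_add_le _ _
    _ = ‖Complex.exp (x * Complex.I) - ∑ m ∈ range 6, (x * Complex.I) ^ m / m.factorial‖ / 2 +
          ‖Complex.exp (-x * Complex.I) - ∑ m ∈ range 6, (-x * Complex.I) ^ m / m.factorial‖ / 2 := by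
      simp [map_div₀]
    _ ≤ ‖x * Complex.I‖ ^ 6 * (Nat.succ 6 * ((Nat.factorial 6) * (6 : ℕ) : ℝ)⁻¹) / 2 +
          ‖-x * Complex.I‖ ^ 6 * (Nat.succ 6 * ((Nat.factorial 6) * (6 : ℕ) : ℝ)⁻¹) / 2 := by
      gcongr
      · exact Complex.exp_bound (by simpa) (by decide)
      · exact Complex.exp_bound (by simpa) (by decide)
    _ ≤ |x| ^ 6 * (7 / 4320) := by norm_num [Nat.factorial]

theorem sin_bound6 {x : ℝ} (hx : |x| ≤ 1) :
    |Real.sin x - (x - x ^ 3 / 6 + x ^ 5 / 120)| ≤ |x| ^ 6 * (7 / 4320) :=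
  calc
    |Real.sin x - (x - x ^ 3 / 6 + x ^ 5 / 120)|
        = ‖Complex.sin x - (x - x ^ 3 / 6 + x ^ 5 / 120 : ℝ)‖ := by
      rw [← Real.norm_eq_abs, ← Complex.norm_real]; simp
    _ = ‖((Complex.exp (-x * Complex.I) - Complex.exp (x * Complex.I)) * Complex.I -
          (2 * x - x ^ 3 / 3 + x ^ 5 / 60 : ℝ)) / 2‖ := by
      rw [Complex.sin]
      push_cast
      ring_nf
    _ = ‖((Complex.exp (-x * Complex.I) - ∑ m ∈ range 6, (-x * Complex.I) ^ m / m.factorial) -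
                (Complex.exp (x * Complex.I) - ∑ m ∈ range 6, (x * Complex.I) ^ m / m.factorial)) * Complex.I / 2‖ := by
      congr 1
      simp only [sum_range_succ, range_zero, sum_empty, Nat.factorial]
      push_cast
      ring_nf
      simp [Complex.I_sq]
      ring_nf
    _ ≤ ‖(Complex.exp (-x * Complex.I) - ∑ m ∈ range 6, (-x * Complex.I) ^ m / m.factorial) * Complex.I / 2‖ +
          ‖-((Complex.exp (x * Complex.I) - ∑ m ∈ range 6, (x * Complex.I) ^ m / m.factorial) * Complex.I) / 2‖ := by
      rw [sub_mul, sub_eq_add_neg, add_div]; exact norm_add_le _ _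
    _ = ‖Complex.exp (x * Complex.I) - ∑ m ∈ range 6, (x * Complex.I) ^ m / m.factorial‖ / 2 +
          ‖Complex.exp (-x * Complex.I) - ∑ m ∈ range 6, (-x * Complex.I) ^ m / m.factorial‖ / 2 := by
      simp [add_comm, map_div₀]
    _ ≤ ‖x * Complex.I‖ ^ 6 * (Nat.succ 6 * (Nat.factorial 6 * (6 : ℕ) : ℝ)⁻¹) / 2 +
          ‖-x * Complex.I‖ ^ 6 * (Nat.succ 6 * (Nat.factorial 6 * (6 : ℕ) : ℝ)⁻¹) / 2 := by
      gcongr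
      · exact Complex.exp_bound (by simpa) (by decide)
      · exact Complex.exp_bound (by simpa) (by decide)
    _ ≤ |x| ^ 6 * (7 / 4320) := by norm_num [Nat.factorial]

/-- numerator of the integrand -/
noncomputable def num8 (w : ℝ) : ℝ := 5 * w * Real.sin w - (w ^ 2 - 8) * Real.cos w - 8

/-- numerator of the elementary part of the antiderivative -/
noncomputable def NN8 (w : ℝ) : ℝ :=
  8/5 - w^3 * Real.sin w / 40 - 17 * w * Real.sin w / 20
    - w^4 * Real.cos w / 40 + w^2 * Real.cos w / 20 - 8 * Real.cos w / 5

/-- the antiderivative -/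
noncomputable def FF8 (w : ℝ) : ℝ :=
  (π/2) * (NN8 w / w^5) - (π/80) * ∫ t in (0:ℝ)..w, Real.sin t / t

lemma II_of_bound {f : ℝ → ℝ} (C : ℝ) (hm : Measurable f) (hb : ∀ t, |f t| ≤ C) (a b : ℝ) :
    IntervalIntegrable f volume a b := by
  have h : ∀ u v : ℝ, IntegrableOn f (Set.Ioc u v) volume := by
    intro u v
    have hC : IntegrableOn (fun _ : ℝ => C) (Set.Ioc u v) volume :=
      integrableOn_const measure_Ioc_lt_top.ne
    refine Integrable.mono' hC hm.aestronglyMeasurable.restrict (ae_of_all _ fun t => ?_)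
    simpa using hb t
  exact ⟨h a b, h b a⟩

lemma sinc_bound (t : ℝ) : |Real.sin t / t| ≤ 1 := by
  rcases eq_or_ne t 0 with h | h
  · simp [h]
  · rw [abs_div, div_le_one (abs_pos.2 h)]
    exact Real.abs_sin_le_abs

lemma sinc_meas : Measurable fun t : ℝ => Real.sin t / t :=
  Real.measurable_sin.div measurable_id

lemma sinc_integrable (a b : ℝ) : IntervalIntegrable (fun t => Real.sin t / t) volume a b :=
  II_of_bound 1 sinc_meas sinc_bound a b

lemma NN8_bound {w : ℝ} (hw : |w| ≤ 1) : |NN8 w| ≤ |w|^6 := by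
  have hs := sin_bound6 hw
  have hc := cos_bound6 hw
  set s := Real.sin w - (w - w^3/6 + w^5/120) with hsdef
  set c := Real.cos w - (1 - w^2/2 + w^4/24) with hcdef
  have hsin : Real.sin w = s + (w - w^3/6 + w^5/120) := by rw [hsdef]; ring
  have hcos : Real.cos w = c + (1 - w^2/2 + w^4/24) := by rw [hcdef]; ring
  have key : NN8 w = ((7/600)*w^6 - (1/800)*w^8)
      + ((-(w^3/40) - 17*w/20)*s + (-(w^4/40) + w^2/20 - 8/5)*c) := by
    rw [NN8, hsin, hcos]; ring
  have h1 : |w|^3 ≤ 1 := pow_le_one₀ (abs_nonneg w) hw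
  have h2 : |w|^2 ≤ 1 := pow_le_one₀ (abs_nonneg w) hw
  have h4 : |w|^4 ≤ 1 := pow_le_one₀ (abs_nonneg w) hw
  have h8 : |w|^8 ≤ |w|^6 := pow_le_pow_of_le_one (abs_nonneg w) hw (by norm_num)
  have hw6 : (0:ℝ) ≤ |w|^6 := by positivity
  have e1 : |(-(w^3/40) - 17*w/20)| ≤ 9/10 := by
    calc |(-(w^3/40) - 17*w/20)| ≤ |(-(w^3/40))| + |17*w/20| := abs_sub _ _
      _ = |w|^3/40 + 17*|w|/20 := by rw [abs_neg, abs_div, abs_div, abs_pow, abs_mul]; norm_num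
      _ ≤ 9/10 := by nlinarith [abs_nonneg w]
  have e2 : |(-(w^4/40) + w^2/20 - 8/5)| ≤ 17/10 := by
    calc |(-(w^4/40) + w^2/20 - 8/5)| ≤ |(-(w^4/40) + w^2/20)| + |(8/5 : ℝ)| := abs_sub _ _
      _ ≤ |(-(w^4/40))| + |w^2/20| + |(8/5 : ℝ)| := by gcongr; exact abs_add_le _ _
      _ = |w|^4/40 + |w|^2/20 + 8/5 := by
          rw [abs_neg, abs_div, abs_div, abs_pow, abs_pow]; norm_num
      _ ≤ 17/10 := by nlinarith [abs_nonneg w]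
  calc |NN8 w| = |((7/600)*w^6 - (1/800)*w^8)
      + ((-(w^3/40) - 17*w/20)*s + (-(w^4/40) + w^2/20 - 8/5)*c)| := by rw [key]
    _ ≤ |((7/600)*w^6 - (1/800)*w^8)|
      + (|(-(w^3/40) - 17*w/20)*s| + |(-(w^4/40) + w^2/20 - 8/5)*c|) :=
        (abs_add_le _ _).trans (by gcongr; exact abs_add_le _ _)
    _ ≤ ((7/600)*|w|^6 + (1/800)*|w|^8)
      + ((9/10)*(|w|^6*(7/4320)) + (17/10)*(|w|^6*(7/4320))) := by
        gcongr ?_ + (?_ + ?_)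
        · calc |((7/600)*w^6 - (1/800)*w^8)| ≤ |(7/600)*w^6| + |(1/800)*w^8| := abs_sub _ _
            _ = (7/600)*|w|^6 + (1/800)*|w|^8 := by
                rw [abs_mul, abs_mul, abs_pow, abs_pow,
                  abs_of_pos (show (0:ℝ) < 7/600 by norm_num),
                  abs_of_pos (show (0:ℝ) < 1/800 by norm_num)]
        · rw [abs_mul]; exact mul_le_mul e1 hs (abs_nonneg _) (by norm_num)
        · rw [abs_mul]; exact mul_le_mul e2 hc (abs_nonneg _) (by norm_num)
    _ ≤ |w|^6 := by nlinarith

lemma num8_bound {w : ℝ} (hw : |w| ≤ 1) : |num8 w| ≤ |w|^6 := by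
  have hs := sin_bound6 hw
  have hc := cos_bound6 hw
  set s := Real.sin w - (w - w^3/6 + w^5/120) with hsdef
  set c := Real.cos w - (1 - w^2/2 + w^4/24) with hcdef
  have hsin : Real.sin w = s + (w - w^3/6 + w^5/120) := by rw [hsdef]; ring
  have hcos : Real.cos w = c + (1 - w^2/2 + w^4/24) := by rw [hcdef]; ring
  have key : num8 w = (5*w)*s + (8 - w^2)*c := by rw [num8, hsin, hcos]; ring
  have h2 : |w|^2 ≤ 1 := pow_le_one₀ (abs_nonneg w) hw
  have hw6 : (0:ℝ) ≤ |w|^6 := by positivity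
  have e1 : |5*w| ≤ 5 := by
    rw [abs_mul, show |(5:ℝ)| = 5 by norm_num]; linarith
  have e2 : |8 - w^2| ≤ 9 := by
    calc |8 - w^2| ≤ |(8:ℝ)| + |w^2| := abs_sub _ _
      _ = 8 + |w|^2 := by rw [abs_pow]; norm_num
      _ ≤ 9 := by nlinarith
  calc |num8 w| = |(5*w)*s + (8 - w^2)*c| := by rw [key]
    _ ≤ |(5*w)*s| + |(8 - w^2)*c| := abs_add_le _ _
    _ ≤ 5*(|w|^6*(7/4320)) + 9*(|w|^6*(7/4320)) := by
        gcongr ?_ + ?_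
        · rw [abs_mul]; exact mul_le_mul e1 hs (abs_nonneg _) (by norm_num)
        · rw [abs_mul]; exact mul_le_mul e2 hc (abs_nonneg _) (by norm_num)
    _ ≤ |w|^6 := by nlinarith

lemma f8_bound (w : ℝ) : |(π / 2) * num8 w / w ^ 6| ≤ 44 := by
  rcases eq_or_ne w 0 with h | h
  · norm_num [h, num8]
  have hw6 : (0:ℝ) < w^6 := by positivity
  have hw6' : |w^6| = w^6 := abs_of_pos hw6
  have hpi : |π/2| ≤ 2 := by
    rw [abs_of_pos (by positivity)]
    nlinarith [Real.pi_le_four]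
  rw [abs_div, abs_mul, hw6', div_le_iff₀ hw6]
  rcases le_or_gt (|w|) 1 with hw | hw
  · have h1 := num8_bound hw
    have h3 : |w|^6 = w^6 := by rw [← abs_pow, abs_of_pos hw6]
    nlinarith [abs_nonneg (num8 w), abs_nonneg (π/2)]
  · have hww : 1 ≤ w^2 := by nlinarith [sq_abs w]
    have hs : |Real.sin w| ≤ 1 := Real.abs_sin_le_one w
    have hc : |Real.cos w| ≤ 1 := Real.abs_cos_le_one w
    have e3 : |w^2 - 8| ≤ w^2 + 8 := by
      calc |w^2 - 8| ≤ |w^2| + |(8:ℝ)| := abs_sub _ _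
        _ = w^2 + 8 := by rw [abs_of_nonneg (sq_nonneg w)]; norm_num
    have e4 : |num8 w| ≤ 5 * |w| * |Real.sin w| + |w^2-8| * |Real.cos w| + 8 := by
      rw [num8]
      calc |5 * w * Real.sin w - (w ^ 2 - 8) * Real.cos w - 8|
          ≤ |5 * w * Real.sin w - (w^2-8)*Real.cos w| + |(8:ℝ)| := abs_sub _ _
        _ ≤ |5 * w * Real.sin w| + |(w^2-8)*Real.cos w| + |(8:ℝ)| := by
            gcongr
            exact abs_sub _ _
        _ = 5 * |w| * |Real.sin w| + |w^2-8| * |Real.cos w| + 8 := by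
            rw [abs_mul, abs_mul, abs_mul, show |(5:ℝ)|=5 by norm_num,
              show |(8:ℝ)|=8 by norm_num]
    have h1 : |num8 w| ≤ 22 * w^2 := by
      nlinarith [abs_nonneg w, abs_nonneg (Real.cos w), abs_nonneg (Real.sin w),
        abs_nonneg (w^2-8), sq_abs w]
    have h2 : w^2 ≤ w^6 := by
      calc w^2 = w^2 * 1 * 1 := by ring
        _ ≤ w^2 * w^2 * w^2 := by gcongr <;> nlinarith
        _ = w^6 := by ring
    nlinarith [abs_nonneg (num8 w), abs_nonneg (π/2)]

lemma f8_meas : Measurable fun w : ℝ => (π / 2) * num8 w / w ^ 6 := by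
  apply Measurable.div
  · exact (measurable_const.mul (by unfold num8; fun_prop))
  · fun_prop

lemma f8_integrable (a b : ℝ) :
    IntervalIntegrable (fun w => (π / 2) * num8 w / w ^ 6) volume a b :=
  II_of_bound 44 f8_meas f8_bound a b

noncomputable def dNN8 (w : ℝ) : ℝ :=
  -(3*w^2*Real.sin w + w^3*Real.cos w)/40 - 17*(Real.sin w + w*Real.cos w)/20
    - (4*w^3*Real.cos w - w^4*Real.sin w)/40 + (2*w*Real.cos w - w^2*Real.sin w)/20
    + 8*Real.sin w/5

lemma NN8_hasDeriv (w : ℝ) : HasDerivAt NN8 (dNN8 w) w := by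
  have hs := Real.hasDerivAt_sin w
  have hc := Real.hasDerivAt_cos w
  have h2 := hasDerivAt_pow 2 w
  have h3 := hasDerivAt_pow 3 w
  have h4 := hasDerivAt_pow 4 w
  have hid := hasDerivAt_id w
  have H := (((((hasDerivAt_const w ((8:ℝ)/5)).sub ((h3.mul hs).div_const 40)).sub
      ((((hasDerivAt_const w (17:ℝ)).mul hid).mul hs).div_const 20)).sub
      ((h4.mul hc).div_const 40)).add ((h2.mul hc).div_const 20)).sub
      (((hasDerivAt_const w (8:ℝ)).mul hc).div_const 5)
  have hFun : NN8 = fun w => 8/5 - w^3 * Real.sin w / 40 - 17 * w * Real.sin w / 20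
      - w^4 * Real.cos w / 40 + w^2 * Real.cos w / 20 - 8 * Real.cos w / 5 := rfl
  rw [hFun]
  convert H using 1
  · rfl
  · rfl
  · rfl
  unfold dNN8
  push_cast
  simp only [id_eq, Pi.mul_apply]
  ring

lemma FF8_hasDeriv {w : ℝ} (hw : w ≠ 0) : HasDerivAt FF8 ((π/2) * num8 w / w^6) w := by
  have h5 : HasDerivAt (fun w : ℝ => w^5) (5*w^4) w := by
    simpa using hasDerivAt_pow 5 w
  have hq : HasDerivAt (fun w => NN8 w / w^5)
      ((dNN8 w * w^5 - NN8 w * (5*w^4))/(w^5)^2) w :=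
    (NN8_hasDeriv w).div h5 (pow_ne_zero 5 hw)
  have hSi : HasDerivAt (fun w => ∫ t in (0:ℝ)..w, Real.sin t / t) (Real.sin w / w) w := by
    refine intervalIntegral.integral_hasDerivAt_right (sinc_integrable 0 w)
      ⟨Set.univ, Filter.univ_mem, sinc_meas.aestronglyMeasurable.restrict⟩ ?_
    exact (Real.continuous_sin.continuousAt).div continuousAt_id hw
  have H := (hq.const_mul (π/2)).sub (hSi.const_mul (π/80))
  have hFun : FF8 = fun w => (π/2) * (NN8 w / w^5)
      - (π/80) * ∫ t in (0:ℝ)..w, Real.sin t / t := rfl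
  rw [hFun]
  convert H using 1
  · rfl
  · rfl
  · rfl
  unfold num8 dNN8 NN8
  field_simp
  ring

lemma NN8_cont : Continuous NN8 := by
  have hFun : NN8 = fun w => 8/5 - w^3 * Real.sin w / 40 - 17 * w * Real.sin w / 20
      - w^4 * Real.cos w / 40 + w^2 * Real.cos w / 20 - 8 * Real.cos w / 5 := rfl
  rw [hFun]; fun_prop

lemma FF8_cont : Continuous FF8 := by
  rw [continuous_iff_continuousAt]
  intro w
  have hSi : Continuous fun w : ℝ => ∫ t in (0:ℝ)..w, Real.sin t / t :=
    intervalIntegral.continuous_primitive sinc_integrable 0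
  have hq : ContinuousAt (fun w => NN8 w / w^5) w := by
    rcases eq_or_ne w 0 with rfl | hw
    · have h0 : NN8 0 / (0:ℝ)^5 = 0 := by norm_num
      rw [ContinuousAt]
      show Filter.Tendsto _ _ (nhds (NN8 0 / (0:ℝ)^5))
      rw [h0]
      have hev : ∀ᶠ x in nhds (0:ℝ), ‖NN8 x / x^5‖ ≤ |x| := by
        filter_upwards [Metric.ball_mem_nhds (0:ℝ) one_pos] with x hx
        have hx1 : |x| ≤ 1 := by
          have h' := Metric.mem_ball.1 hx
          rw [Real.dist_eq] at h'
          simpa using h'.le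
        rcases eq_or_ne x 0 with rfl | hx0
        · norm_num
        · rw [Real.norm_eq_abs, abs_div, abs_pow,
            div_le_iff₀ (by positivity : (0:ℝ) < |x|^5)]
          calc |NN8 x| ≤ |x|^6 := NN8_bound hx1
            _ = |x| * |x|^5 := by ring
      have habs : Filter.Tendsto (fun x : ℝ => |x|) (nhds 0) (nhds 0) := by
        simpa using (continuous_abs.tendsto (0:ℝ))
      exact squeeze_zero_norm' hev habs
    · exact (NN8_cont.continuousAt).div ((continuous_pow 5).continuousAt)
        (pow_ne_zero 5 hw)
  exact (continuousAt_const.mul hq).sub (continuousAt_const.mul hSi.continuousAt)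

/-- The second-order coefficient integral of Theorem 1.1:
`∫_{-2π}^{2π} (π/2)(5w sin w - (w² - 8)cos w - 8)/w⁶ dw = (1/160)(1/π² - 2 - 4π Si(2π))`.
(The integrand has a removable singularity at `w = 0`, a set of measure zero.) -/
theorem stmt8 :
    (∫ w in (-(2 * π))..(2 * π),
        (π / 2) * (5 * w * sin w - (w ^ 2 - 8) * cos w - 8) / w ^ 6)
      = (1 / 160) * (1 / π ^ 2 - 2 - 4 * π * ∫ t in (0:ℝ)..(2 * π), sin t / t) := by
  have h2pi : (0:ℝ) < 2 * π := by positivity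
  have h1 : ∫ w in (0:ℝ)..(2*π), (π/2) * num8 w / w^6 = FF8 (2*π) - FF8 0 :=
    intervalIntegral.integral_eq_sub_of_hasDeriv_right_of_le h2pi.le FF8_cont.continuousOn
      (fun x hx => (FF8_hasDeriv (ne_of_gt hx.1)).hasDerivWithinAt) (f8_integrable 0 (2*π))
  have h2 : ∫ w in (-(2*π))..(0:ℝ), (π/2) * num8 w / w^6 = FF8 0 - FF8 (-(2*π)) :=
    intervalIntegral.integral_eq_sub_of_hasDeriv_right_of_le (by linarith) FF8_cont.continuousOn
      (fun x hx => (FF8_hasDeriv (ne_of_lt hx.2)).hasDerivWithinAt) (f8_integrable (-(2*π)) 0)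
  have h3 : ∫ w in (-(2*π))..(2*π), (π/2) * num8 w / w^6 = FF8 (2*π) - FF8 (-(2*π)) := by
    rw [← intervalIntegral.integral_add_adjacent_intervals (f8_integrable (-(2*π)) 0)
      (f8_integrable 0 (2*π)), h1, h2]
    ring
  have hSiOdd : ∫ t in (0:ℝ)..(-(2*π)), Real.sin t / t
      = -∫ t in (0:ℝ)..(2*π), Real.sin t / t := by
    have he : (fun t : ℝ => Real.sin (-t) / (-t)) = fun t => Real.sin t / t := by
      funext t
      rw [Real.sin_neg, neg_div_neg_eq]
    have hcn := intervalIntegral.integral_comp_neg (a := (0:ℝ)) (b := 2*π)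
      (fun t => Real.sin t / t)
    rw [he, neg_zero] at hcn
    rw [intervalIntegral.integral_symm, ← hcn]
  have hnum : ∀ w : ℝ, (π / 2) * (5 * w * Real.sin w - (w ^ 2 - 8) * Real.cos w - 8) / w ^ 6
      = (π/2) * num8 w / w^6 := fun w => rfl
  simp only [hnum]
  rw [h3]
  have hFun : ∀ x : ℝ, FF8 x = (π/2) * (NN8 x / x^5)
      - (π/80) * ∫ t in (0:ℝ)..x, Real.sin t / t := fun x => rfl
  have hN : ∀ x : ℝ, NN8 x = 8/5 - x^3 * Real.sin x / 40 - 17 * x * Real.sin x / 20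
      - x^4 * Real.cos x / 40 + x^2 * Real.cos x / 20 - 8 * Real.cos x / 5 := fun x => rfl
  rw [hFun, hFun, hN, hN, hSiOdd, Real.sin_neg, Real.cos_neg, Real.sin_two_pi,
    Real.cos_two_pi]
  have hpi : π ≠ 0 := Real.pi_ne_zero
  set S := ∫ t in (0:ℝ)..(2*π), Real.sin t / t with hS
  have h2pine : (2*π)^5 ≠ 0 := by positivity
  have h2pine' : (-(2*π))^5 ≠ 0 := pow_ne_zero 5 (neg_ne_zero.2 (ne_of_gt h2pi))
  field_simp
  ring
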